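/- For every natural number n, the game {0 | n·↑ + *} is equal (as a game value) to (n+1)·↑. -/

import Mathlib

universe u

namespace SetTheory

/-- Pre-games, as formerly defined in Mathlib (`SetTheory.PGame`, removed from Mathlib since). -/
inductive PGame : Type (u + 1)
  | mk : ∀ α β : Type u, (α → PGame) → (β → PGame) → PGame

namespace PGame

/-- The pre-game with no options, as in former Mathlib. -/
instance : Zero PGame.{u} :=
  ⟨PGame.mk PEmpty PEmpty PEmpty.elim PEmpty.elim⟩

/-- Sum of pre-games, as in former Mathlib. -/
noncomputable def add (x : PGame.{u}) : PGame.{u} → PGame.{u} :=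
  PGame.rec (motive := fun _ => PGame.{u} → PGame.{u})
    (fun xl xr _ _ IHxl IHxr y =>
      PGame.rec (motive := fun _ => PGame.{u})
        (fun yl yr yL yR IHyl IHyr =>
          PGame.mk (xl ⊕ yl) (xr ⊕ yr)
            (Sum.rec (fun i => IHxl i (PGame.mk yl yr yL yR)) IHyl)
            (Sum.rec (fun i => IHxr i (PGame.mk yl yr yL yR)) IHyr)) y) x

noncomputable instance : Add PGame.{u} := ⟨add⟩

/-- Pair (x ≤ y, x ⧏ y), as in former Mathlib's `le_lf`. -/
noncomputable def leLF (x : PGame.{u}) : PGame.{u} → Prop × Prop :=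
  PGame.rec (motive := fun _ => PGame.{u} → Prop × Prop)
    (fun xl xr xL xR IHxl IHxr y =>
      PGame.rec (motive := fun _ => Prop × Prop)
        (fun yl yr yL yR IHyl IHyr =>
          ((∀ i, (IHxl i (PGame.mk yl yr yL yR)).2) ∧ ∀ j, (IHyr j).2,
            (∃ i, (IHyl i).1) ∨ ∃ j, (IHxr j (PGame.mk yl yr yL yR)).1)) y) x

noncomputable instance : LE PGame.{u} := ⟨fun x y => (leLF x y).1⟩

/-- Game equivalence `x ≈ y ↔ x ≤ y ∧ y ≤ x`, as in former Mathlib. -/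
instance : HasEquiv PGame.{u} := ⟨fun x y => x ≤ y ∧ y ≤ x⟩

/-- Pre-game from lists of options, as in former Mathlib. -/
def ofLists (L R : List PGame.{u}) : PGame.{u} :=
  PGame.mk (ULift (Fin L.length)) (ULift (Fin R.length)) (fun i => L[i.down.1]) fun j => R[j.down.1]

end PGame

end SetTheory

open SetTheory PGame

/-- star = {0|0} -/
noncomputable def star' : PGame := PGame.ofLists [0] [0]
/-- up = {0|*} -/
noncomputable def up' : PGame := PGame.ofLists [0] [star']
/-- down = {*|0} -/
noncomputable def down' : PGame := PGame.ofLists [star'] [0]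

/-- sum of n copies of up -/
noncomputable def nUp : ℕ → PGame
  | 0 => 0
  | n + 1 => nUp n + up'

/-- sum of n copies of down -/
noncomputable def nDown : ℕ → PGame
  | 0 => 0
  | n + 1 => nDown n + down'

/-- iterated up: up^[1] = ↑, up^[n] = {up^[n-1] | *} -/
noncomputable def upIter : ℕ → PGame
  | 0 => 0
  | 1 => up'
  | n + 2 => PGame.ofLists [upIter (n + 1)] [star']

/-- iterated down: down_[1] = ↓, down_[n] = {* | down_[n-1]} -/
noncomputable def downIter : ℕ → PGame
  | 0 => 0
  | 1 => down'
  | n + 2 => PGame.ofLists [star'] [downIter (n + 1)]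

namespace SetTheory

namespace PGame

/-! ### Compatibility layer: the part of former Mathlib's `PGame` theory used below -/

def LeftMoves : PGame.{u} → Type u
  | mk l _ _ _ => l

def RightMoves : PGame.{u} → Type u
  | mk _ r _ _ => r

def moveLeft : (g : PGame.{u}) → LeftMoves g → PGame.{u}
  | mk _ _ L _ => L

def moveRight : (g : PGame.{u}) → RightMoves g → PGame.{u}
  | mk _ _ _ R => R

def LF (x y : PGame.{u}) : Prop := (leLF x y).2

infix:50 " ⧏ " => LF

instance isEmpty_zero_leftMoves : IsEmpty (LeftMoves (0 : PGame.{u})) :=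
  inferInstanceAs (IsEmpty PEmpty)

instance isEmpty_zero_rightMoves : IsEmpty (RightMoves (0 : PGame.{u})) :=
  inferInstanceAs (IsEmpty PEmpty)

theorem le_iff_forall_lf {x y : PGame.{u}} :
    x ≤ y ↔ (∀ i, x.moveLeft i ⧏ y) ∧ ∀ j, x ⧏ y.moveRight j := by
  cases x; cases y; exact Iff.rfl

theorem lf_iff_exists_le {x y : PGame.{u}} :
    x ⧏ y ↔ (∃ i, x ≤ y.moveLeft i) ∨ ∃ j, x.moveRight j ≤ y := by
  cases x; cases y; exact Iff.rfl

theorem le_lf_not_aux (x y : PGame.{u}) : (x ≤ y ↔ ¬ y ⧏ x) ∧ (x ⧏ y ↔ ¬ y ≤ x) := by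
  induction x generalizing y with
  | mk xl xr xL xR IHxl IHxr =>
    induction y with
    | mk yl yr yL yR IHyl IHyr =>
      constructor
      · have h1 : ∀ i, (xL i ⧏ PGame.mk yl yr yL yR ↔ ¬ PGame.mk yl yr yL yR ≤ xL i) :=
          fun i => (IHxl i _).2
        have h2 : ∀ j, (PGame.mk xl xr xL xR ⧏ yR j ↔ ¬ yR j ≤ PGame.mk xl xr xL xR) :=
          fun j => (IHyr j).2
        show ((∀ i, xL i ⧏ PGame.mk yl yr yL yR) ∧ ∀ j, PGame.mk xl xr xL xR ⧏ yR j) ↔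
          ¬((∃ i, PGame.mk yl yr yL yR ≤ xL i) ∨ ∃ j, yR j ≤ PGame.mk xl xr xL xR)
        simp only [h1, h2, not_or, not_exists]
      · have h3 : ∀ i, (PGame.mk xl xr xL xR ≤ yL i ↔ ¬ yL i ⧏ PGame.mk xl xr xL xR) :=
          fun i => (IHyl i).1
        have h4 : ∀ j, (xR j ≤ PGame.mk yl yr yL yR ↔ ¬ PGame.mk yl yr yL yR ⧏ xR j) :=
          fun j => (IHxr j _).1
        show ((∃ i, PGame.mk xl xr xL xR ≤ yL i) ∨ ∃ j, xR j ≤ PGame.mk yl yr yL yR) ↔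
          ¬((∀ i, yL i ⧏ PGame.mk xl xr xL xR) ∧ ∀ j, PGame.mk yl yr yL yR ⧏ xR j)
        simp only [h3, h4, not_and_or, not_forall]

theorem not_le {x y : PGame.{u}} : ¬ x ≤ y ↔ y ⧏ x := ((le_lf_not_aux y x).2).symm

theorem not_lf {x y : PGame.{u}} : ¬ x ⧏ y ↔ y ≤ x := by
  rw [(le_lf_not_aux y x).1]

@[refl] protected theorem le_refl (x : PGame.{u}) : x ≤ x := by
  induction x with
  | mk xl xr xL xR IHl IHr =>
    exact ⟨fun i => lf_iff_exists_le.2 (Or.inl ⟨i, IHl i⟩),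
      fun j => (lf_iff_exists_le (x := PGame.mk xl xr xL xR) (y := xR j)).2 (Or.inr ⟨j, IHr j⟩)⟩

theorem lf_of_le_moveLeft {x y : PGame.{u}} {i : y.LeftMoves} (h : x ≤ y.moveLeft i) : x ⧏ y :=
  lf_iff_exists_le.2 (Or.inl ⟨i, h⟩)

theorem lf_of_moveRight_le {x y : PGame.{u}} {j : x.RightMoves} (h : x.moveRight j ≤ y) : x ⧏ y :=
  lf_iff_exists_le.2 (Or.inr ⟨j, h⟩)

theorem moveLeft_lf_of_le {x y : PGame.{u}} (h : x ≤ y) (i : x.LeftMoves) : x.moveLeft i ⧏ y :=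
  (le_iff_forall_lf.1 h).1 i

theorem lf_moveRight_of_le {x y : PGame.{u}} (h : x ≤ y) (j : y.RightMoves) : x ⧏ y.moveRight j :=
  (le_iff_forall_lf.1 h).2 j

theorem le_trans_aux {x y z : PGame.{u}}
    (h₁ : ∀ {i}, y ≤ z → z ≤ x.moveLeft i → y ≤ x.moveLeft i)
    (h₂ : ∀ {j}, z.moveRight j ≤ x → x ≤ y → z.moveRight j ≤ y) (hxy : x ≤ y) (hyz : y ≤ z) :
    x ≤ z :=
  le_iff_forall_lf.2
    ⟨fun i => not_le.1 fun h => not_lf.2 (h₁ hyz h) (moveLeft_lf_of_le hxy i),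
     fun j => not_le.1 fun h => not_lf.2 (h₂ h hxy) (lf_moveRight_of_le hyz j)⟩

theorem le_trans_triple (x y z : PGame.{u}) :
    (x ≤ y → y ≤ z → x ≤ z) ∧ (y ≤ z → z ≤ x → y ≤ x) ∧ (z ≤ x → x ≤ y → z ≤ y) := by
  induction x generalizing y z with
  | mk xl xr xL xR IHxl IHxr =>
  induction y generalizing z with
  | mk yl yr yL yR IHyl IHyr =>
  induction z with
  | mk zl zr zL zR IHzl IHzr =>
  exact
    ⟨le_trans_aux (fun {i} => (IHxl i _ _).2.1) fun {j} => (IHzr j).2.2,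
      le_trans_aux (fun {i} => (IHyl i _).2.2) fun {j} => (IHxr j _ _).1,
      le_trans_aux (fun {i} => (IHzl i).1) fun {j} => (IHyr j _).2.1⟩

noncomputable instance : Preorder PGame.{u} :=
  { toLE := inferInstance
    le_refl := PGame.le_refl
    le_trans := fun x y z => (le_trans_triple x y z).1
    lt := fun x y => x ≤ y ∧ x ⧏ y
    lt_iff_le_not_ge := fun _ _ => and_congr_right fun _ => not_le.symm }

theorem lt_iff_le_and_lf {x y : PGame.{u}} : x < y ↔ x ≤ y ∧ x ⧏ y := Iff.rfl

theorem lf_of_lt {x y : PGame.{u}} (h : x < y) : x ⧏ y := h.2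

theorem lf_of_lf_of_le {x y z : PGame.{u}} (h₁ : x ⧏ y) (h₂ : y ≤ z) : x ⧏ z :=
  not_le.1 fun h => not_lf.2 (le_trans h₂ h) h₁

theorem lf_of_le_of_lf {x y z : PGame.{u}} (h₁ : x ≤ y) (h₂ : y ⧏ z) : x ⧏ z :=
  not_le.1 fun h => not_lf.2 (le_trans h h₁) h₂

theorem lf_congr_left {x₁ x₂ y : PGame.{u}} (h : x₁ ≈ x₂) : x₁ ⧏ y ↔ x₂ ⧏ y :=
  ⟨fun h' => lf_of_le_of_lf h.2 h', fun h' => lf_of_le_of_lf h.1 h'⟩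

theorem equiv_refl (x : PGame.{u}) : x ≈ x := ⟨PGame.le_refl x, PGame.le_refl x⟩

theorem equiv_symm {x y : PGame.{u}} (h : x ≈ y) : y ≈ x := ⟨h.2, h.1⟩

theorem equiv_trans {x y z : PGame.{u}} (h₁ : x ≈ y) (h₂ : y ≈ z) : x ≈ z :=
  ⟨le_trans h₁.1 h₂.1, le_trans h₂.2 h₁.2⟩

/-! moves of sums -/

def toLeftMovesAdd : {x y : PGame.{u}} → x.LeftMoves ⊕ y.LeftMoves → (x + y).LeftMoves
  | mk _ _ _ _, mk _ _ _ _, k => k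

def toRightMovesAdd : {x y : PGame.{u}} → x.RightMoves ⊕ y.RightMoves → (x + y).RightMoves
  | mk _ _ _ _, mk _ _ _ _, k => k

theorem add_moveLeft_inl {x y : PGame.{u}} (i : x.LeftMoves) :
    (x + y).moveLeft (toLeftMovesAdd (Sum.inl i)) = x.moveLeft i + y := by
  cases x; cases y; rfl

theorem add_moveLeft_inr {x y : PGame.{u}} (i : y.LeftMoves) :
    (x + y).moveLeft (toLeftMovesAdd (Sum.inr i)) = x + y.moveLeft i := by
  cases x; cases y; rfl

theorem add_moveRight_inl {x y : PGame.{u}} (i : x.RightMoves) :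
    (x + y).moveRight (toRightMovesAdd (Sum.inl i)) = x.moveRight i + y := by
  cases x; cases y; rfl

theorem add_moveRight_inr {x y : PGame.{u}} (i : y.RightMoves) :
    (x + y).moveRight (toRightMovesAdd (Sum.inr i)) = x + y.moveRight i := by
  cases x; cases y; rfl

theorem leftMoves_add_cases {x y : PGame.{u}} (k : (x + y).LeftMoves)
    {P : (x + y).LeftMoves → Prop} (hl : ∀ i, P (toLeftMovesAdd (Sum.inl i)))
    (hr : ∀ i, P (toLeftMovesAdd (Sum.inr i))) : P k := by
  cases x; cases y
  rcases k with i | i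
  · exact hl i
  · exact hr i

theorem rightMoves_add_cases {x y : PGame.{u}} (k : (x + y).RightMoves)
    {P : (x + y).RightMoves → Prop} (hl : ∀ i, P (toRightMovesAdd (Sum.inl i)))
    (hr : ∀ i, P (toRightMovesAdd (Sum.inr i))) : P k := by
  cases x; cases y
  rcases k with i | i
  · exact hl i
  · exact hr i

/-! lists -/

def toOfListsLeftMoves {L R : List PGame.{u}} (i : Fin L.length) : (ofLists L R).LeftMoves :=
  ULift.up i

def toOfListsRightMoves {L R : List PGame.{u}} (i : Fin R.length) : (ofLists L R).RightMoves :=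
  ULift.up i

theorem ofLists_moveLeft' {L R : List PGame.{u}} (i : (ofLists L R).LeftMoves) :
    (ofLists L R).moveLeft i =
      L[(ULift.down (α := Fin L.length) i).1]'(ULift.down (α := Fin L.length) i).2 := rfl

theorem ofLists_moveRight' {L R : List PGame.{u}} (i : (ofLists L R).RightMoves) :
    (ofLists L R).moveRight i =
      R[(ULift.down (α := Fin R.length) i).1]'(ULift.down (α := Fin R.length) i).2 := rfl

/-! monotonicity of addition -/

theorem add_mono_aux (x y z : PGame.{u}) :
    (x ≤ y → x + z ≤ y + z) ∧ (x ⧏ y → x + z ⧏ y + z) := by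
  induction z generalizing x y with
  | mk zl zr zL zR IHzl IHzr =>
  induction x generalizing y with
  | mk xl xr xL xR IHxl IHxr =>
  induction y with
  | mk yl yr yL yR IHyl IHyr =>
  constructor
  · intro h
    have h' := le_iff_forall_lf.1 h
    refine le_iff_forall_lf.2 ⟨?_, ?_⟩
    · rintro (i | k)
      · exact (IHxl i _).2 (h'.1 i)
      · exact lf_iff_exists_le.2 (Or.inl ⟨Sum.inr k, (IHzl k _ _).1 h⟩)
    · rintro (j | k)
      · exact (IHyr j).2 (h'.2 j)
      · exact lf_iff_exists_le.2 (Or.inr ⟨Sum.inr k, (IHzr k _ _).1 h⟩)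
  · intro h
    rcases lf_iff_exists_le.1 h with ⟨i, hi⟩ | ⟨j, hj⟩
    · exact lf_iff_exists_le.2 (Or.inl ⟨Sum.inl i, (IHyl i).1 hi⟩)
    · exact lf_iff_exists_le.2 (Or.inr ⟨Sum.inl j, (IHxr j _).1 hj⟩)

theorem add_comm_le (x y : PGame.{u}) : x + y ≤ y + x := by
  induction x generalizing y with
  | mk xl xr xL xR IHxl IHxr =>
  induction y with
  | mk yl yr yL yR IHyl IHyr =>
  refine le_iff_forall_lf.2 ⟨?_, ?_⟩
  · rintro (i | k)
    · exact lf_iff_exists_le.2 (Or.inl ⟨Sum.inr i, IHxl i _⟩)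
    · exact lf_iff_exists_le.2 (Or.inl ⟨Sum.inl k, IHyl k⟩)
  · rintro (k | j)
    · exact lf_iff_exists_le.2 (Or.inr ⟨Sum.inr k, IHyr k⟩)
    · exact lf_iff_exists_le.2 (Or.inr ⟨Sum.inl j, IHxr j _⟩)

theorem add_comm_equiv (x y : PGame.{u}) : x + y ≈ y + x := ⟨add_comm_le x y, add_comm_le y x⟩

theorem add_le_add_right' {x y : PGame.{u}} (h : x ≤ y) (z : PGame.{u}) : x + z ≤ y + z :=
  (add_mono_aux x y z).1 h

theorem add_le_add_left' {x y : PGame.{u}} (h : x ≤ y) (z : PGame.{u}) : z + x ≤ z + y :=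
  le_trans (add_comm_le z x) (le_trans (add_le_add_right' h z) (add_comm_le y z))

theorem add_congr {x₁ x₂ y₁ y₂ : PGame.{u}} (hx : x₁ ≈ x₂) (hy : y₁ ≈ y₂) :
    x₁ + y₁ ≈ x₂ + y₂ :=
  ⟨le_trans (add_le_add_right' hx.1 y₁) (add_le_add_left' hy.1 x₂),
    le_trans (add_le_add_right' hx.2 y₂) (add_le_add_left' hy.2 x₁)⟩

theorem add_assoc_aux (x y z : PGame.{u}) :
    (x + y) + z ≤ x + (y + z) ∧ x + (y + z) ≤ (x + y) + z := by
  induction x generalizing y z with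
  | mk xl xr xL xR IHxl IHxr =>
  induction y generalizing z with
  | mk yl yr yL yR IHyl IHyr =>
  induction z with
  | mk zl zr zL zR IHzl IHzr =>
  constructor
  · refine le_iff_forall_lf.2 ⟨?_, ?_⟩
    · rintro ((i | i) | i)
      · exact lf_iff_exists_le.2 (Or.inl ⟨Sum.inl i, (IHxl i (mk yl yr yL yR) (mk zl zr zL zR)).1⟩)
      · exact lf_iff_exists_le.2 (Or.inl ⟨Sum.inr (Sum.inl i), (IHyl i (mk zl zr zL zR)).1⟩)
      · exact lf_iff_exists_le.2 (Or.inl ⟨Sum.inr (Sum.inr i), (IHzl i).1⟩)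
    · rintro (i | (i | i))
      · exact lf_iff_exists_le.2 (Or.inr ⟨Sum.inl (Sum.inl i), (IHxr i (mk yl yr yL yR) (mk zl zr zL zR)).1⟩)
      · exact lf_iff_exists_le.2 (Or.inr ⟨Sum.inl (Sum.inr i), (IHyr i (mk zl zr zL zR)).1⟩)
      · exact lf_iff_exists_le.2 (Or.inr ⟨Sum.inr i, (IHzr i).1⟩)
  · refine le_iff_forall_lf.2 ⟨?_, ?_⟩
    · rintro (i | (i | i))
      · exact lf_iff_exists_le.2 (Or.inl ⟨Sum.inl (Sum.inl i), (IHxl i (mk yl yr yL yR) (mk zl zr zL zR)).2⟩)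
      · exact lf_iff_exists_le.2 (Or.inl ⟨Sum.inl (Sum.inr i), (IHyl i (mk zl zr zL zR)).2⟩)
      · exact lf_iff_exists_le.2 (Or.inl ⟨Sum.inr i, (IHzl i).2⟩)
    · rintro ((i | i) | i)
      · exact lf_iff_exists_le.2 (Or.inr ⟨Sum.inl i, (IHxr i (mk yl yr yL yR) (mk zl zr zL zR)).2⟩)
      · exact lf_iff_exists_le.2 (Or.inr ⟨Sum.inr (Sum.inl i), (IHyr i (mk zl zr zL zR)).2⟩)
      · exact lf_iff_exists_le.2 (Or.inr ⟨Sum.inr (Sum.inr i), (IHzr i).2⟩)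

theorem add_assoc_equiv (x y z : PGame.{u}) : (x + y) + z ≈ x + (y + z) := add_assoc_aux x y z

theorem add_zero_aux (x : PGame.{u}) : x + 0 ≤ x ∧ x ≤ x + 0 := by
  induction x with
  | mk xl xr xL xR IHl IHr =>
  constructor
  · refine le_iff_forall_lf.2 ⟨?_, ?_⟩
    · rintro (i | i)
      · exact lf_iff_exists_le.2 (Or.inl ⟨i, (IHl i).1⟩)
      · exact isEmptyElim (show (0 : PGame.{u}).LeftMoves from i)
    · intro j
      exact lf_iff_exists_le.2 (Or.inr ⟨Sum.inl j, (IHr j).1⟩)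
  · refine le_iff_forall_lf.2 ⟨?_, ?_⟩
    · intro i
      exact lf_iff_exists_le.2 (Or.inl ⟨Sum.inl i, (IHl i).2⟩)
    · rintro (j | j)
      · exact lf_iff_exists_le.2 (Or.inr ⟨j, (IHr j).2⟩)
      · exact isEmptyElim (show (0 : PGame.{u}).RightMoves from j)

theorem add_zero_equiv (x : PGame.{u}) : x + 0 ≈ x := add_zero_aux x

/-! negation -/

noncomputable def neg (x : PGame.{u}) : PGame.{u} :=
  PGame.rec (motive := fun _ => PGame.{u}) (fun l r _ _ IHl IHr => mk r l IHr IHl) x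

noncomputable instance : Neg PGame.{u} := ⟨neg⟩

theorem neg_mono_aux (x y : PGame.{u}) : (x ≤ y → -y ≤ -x) ∧ (x ⧏ y → -y ⧏ -x) := by
  induction x generalizing y with
  | mk xl xr xL xR IHxl IHxr =>
  induction y with
  | mk yl yr yL yR IHyl IHyr =>
  constructor
  · intro h
    have h' := le_iff_forall_lf.1 h
    exact le_iff_forall_lf.2 ⟨fun j => (IHyr j).2 (h'.2 j), fun i => (IHxl i _).2 (h'.1 i)⟩
  · intro h
    rcases lf_iff_exists_le.1 h with ⟨i, hi⟩ | ⟨j, hj⟩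
    · exact lf_iff_exists_le.2 (Or.inr ⟨i, (IHyl i).1 hi⟩)
    · exact lf_iff_exists_le.2 (Or.inl ⟨j, (IHxr j _).1 hj⟩)

theorem neg_congr {x y : PGame.{u}} (h : x ≈ y) : -x ≈ -y :=
  ⟨(neg_mono_aux y x).1 h.2, (neg_mono_aux x y).1 h.1⟩

theorem neg_add_aux (x : PGame.{u}) : -x + x ≤ 0 ∧ 0 ≤ -x + x := by
  induction x with
  | mk xl xr xL xR IHl IHr =>
  constructor
  · refine le_iff_forall_lf.2 ⟨?_, ?_⟩
    · rintro (j | i)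
      · show -(xR j) + mk xl xr xL xR ⧏ 0
        refine lf_of_moveRight_le
          (j := toRightMovesAdd (x := -(xR j)) (y := mk xl xr xL xR) (Sum.inr j)) ?_
        refine le_of_eq_of_le (add_moveRight_inr (x := -(xR j)) (y := mk xl xr xL xR) j) ?_
        exact (IHr j).1
      · show -(mk xl xr xL xR) + xL i ⧏ 0
        refine lf_of_moveRight_le
          (j := toRightMovesAdd (x := -(mk xl xr xL xR)) (y := xL i) (Sum.inl i)) ?_
        refine le_of_eq_of_le (add_moveRight_inl (x := -(mk xl xr xL xR)) (y := xL i) i) ?_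
        exact (IHl i).1
    · intro j
      exact isEmptyElim (show (0 : PGame.{u}).RightMoves from j)
  · refine le_iff_forall_lf.2 ⟨?_, ?_⟩
    · intro i
      exact isEmptyElim (show (0 : PGame.{u}).LeftMoves from i)
    · rintro (i | j)
      · show 0 ⧏ -(xL i) + mk xl xr xL xR
        refine lf_of_le_moveLeft
          (i := toLeftMovesAdd (x := -(xL i)) (y := mk xl xr xL xR) (Sum.inr i)) ?_
        refine le_of_le_of_eq ?_ (add_moveLeft_inr (x := -(xL i)) (y := mk xl xr xL xR) i).symm
        exact (IHl i).2
      · show 0 ⧏ -(mk xl xr xL xR) + xR j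
        refine lf_of_le_moveLeft
          (i := toLeftMovesAdd (x := -(mk xl xr xL xR)) (y := xR j) (Sum.inl j)) ?_
        refine le_of_le_of_eq ?_ (add_moveLeft_inl (x := -(mk xl xr xL xR)) (y := xR j) j).symm
        exact (IHr j).2

/-- game equivalence as a setoid (not an instance) -/
def setoid : Setoid PGame.{u} :=
  ⟨fun x y => x ≈ y, ⟨equiv_refl, equiv_symm, equiv_trans⟩⟩

end PGame

abbrev Game : Type (u + 1) := Quotient PGame.setoid.{u}

namespace Game

instance : Zero Game.{u} := ⟨Quotient.mk PGame.setoid 0⟩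

noncomputable instance : Add Game.{u} :=
  ⟨Quotient.lift₂ (s₁ := PGame.setoid) (s₂ := PGame.setoid)
    (fun x y => (Quotient.mk PGame.setoid (x + y) : Game))
    fun _ _ _ _ h₁ h₂ => Quotient.sound (PGame.add_congr h₁ h₂)⟩

noncomputable instance : Neg Game.{u} :=
  ⟨Quotient.lift (s := PGame.setoid) (fun x => (Quotient.mk PGame.setoid (-x) : Game))
    fun _ _ h => Quotient.sound (PGame.neg_congr h)⟩

noncomputable instance instLEGame : LE Game.{u} :=
  ⟨Quotient.lift₂ (s₁ := PGame.setoid) (s₂ := PGame.setoid) (fun x y => x ≤ y)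
    fun _ _ _ _ h₁ h₂ => propext
      ⟨fun h => le_trans h₁.2 (le_trans h h₂.1), fun h => le_trans h₁.1 (le_trans h h₂.2)⟩⟩

noncomputable instance : AddCommGroup Game.{u} where
  add_assoc a b c := Quotient.inductionOn₃ (s₁ := PGame.setoid) (s₂ := PGame.setoid)
    (s₃ := PGame.setoid) a b c fun x y z => Quotient.sound (PGame.add_assoc_equiv x y z)
  zero_add a := Quotient.inductionOn (s := PGame.setoid) a fun x =>
    Quotient.sound (PGame.equiv_trans (PGame.add_comm_equiv 0 x) (PGame.add_zero_equiv x))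
  add_zero a := Quotient.inductionOn (s := PGame.setoid) a fun x =>
    Quotient.sound (PGame.add_zero_equiv x)
  add_comm a b := Quotient.inductionOn₂ (s₁ := PGame.setoid) (s₂ := PGame.setoid) a b
    fun x y => Quotient.sound (PGame.add_comm_equiv x y)
  neg_add_cancel a := Quotient.inductionOn (s := PGame.setoid) a fun x =>
    Quotient.sound (neg_add_aux x)
  nsmul := nsmulRec
  zsmul := zsmulRec

noncomputable instance : PartialOrder Game.{u} where
  toLE := instLEGame
  lt := fun a b => a ≤ b ∧ ¬ b ≤ a
  lt_iff_le_not_ge := fun _ _ => Iff.rfl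
  le_refl a := Quotient.inductionOn (s := PGame.setoid) a fun x => PGame.le_refl x
  le_trans a b c := Quotient.inductionOn₃ (s₁ := PGame.setoid) (s₂ := PGame.setoid)
    (s₃ := PGame.setoid) a b c fun x y z => fun h₁ h₂ => @le_trans PGame _ x y z h₁ h₂
  le_antisymm a b := Quotient.inductionOn₂ (s₁ := PGame.setoid) (s₂ := PGame.setoid) a b
    fun x y => fun h₁ h₂ => Quotient.sound ⟨h₁, h₂⟩

noncomputable instance instPreorderGame : Preorder Game.{u} := PartialOrder.toPreorder

instance : IsOrderedAddMonoid Game.{u} where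
  add_le_add_left a b := Quotient.inductionOn₂ (s₁ := PGame.setoid) (s₂ := PGame.setoid) a b
    fun x y h c => Quotient.inductionOn (s := PGame.setoid) c fun z =>
      PGame.add_le_add_right' (x := x) (y := y) h z

end Game

namespace PGame

@[simp] theorem quot_add (x y : PGame.{u}) :
    (Quotient.mk setoid (x + y) : Game) = Quotient.mk setoid x + Quotient.mk setoid y := rfl

@[simp] theorem quot_zero : (Quotient.mk setoid (0 : PGame.{u}) : Game) = 0 := rfl

theorem le_iff_game_le {x y : PGame.{u}} :
    x ≤ y ↔ (Quotient.mk setoid x : Game) ≤ Quotient.mk setoid y := Iff.rfl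

theorem lt_iff_game_lt {x y : PGame.{u}} :
    x < y ↔ (Quotient.mk setoid x : Game) < Quotient.mk setoid y :=
  (lt_iff_le_not_ge (a := x) (b := y)).trans
    (lt_iff_le_not_ge (a := (Quotient.mk setoid x : Game)) (b := Quotient.mk setoid y)).symm

theorem equiv_iff_game_eq {x y : PGame.{u}} :
    x ≈ y ↔ (Quotient.mk setoid x : Game) = Quotient.mk setoid y :=
  ⟨fun h => Quotient.sound h, fun h => Quotient.exact h⟩

theorem game_eq {x y : PGame.{u}} (h : x ≈ y) :
    (Quotient.mk setoid x : Game) = Quotient.mk setoid y := Quotient.sound h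

end PGame

end SetTheory

/-! ### Auxiliary machinery -/

namespace Stmt1Aux

/-- canonical left move of a singleton `ofLists` game -/
noncomputable def lm (x y : PGame.{u}) : (PGame.ofLists [x] [y]).LeftMoves :=
  @toOfListsLeftMoves [x] [y] ⟨0, by simp⟩

/-- canonical right move of a singleton `ofLists` game -/
noncomputable def rm (x y : PGame.{u}) : (PGame.ofLists [x] [y]).RightMoves :=
  @toOfListsRightMoves [x] [y] ⟨0, by simp⟩

lemma ofLists_singleton_moveLeft (x y : PGame.{u}) (i) :
    (PGame.ofLists [x] [y]).moveLeft i = x := by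
  rw [PGame.ofLists_moveLeft']
  exact List.getElem_singleton _

lemma ofLists_singleton_moveRight (x y : PGame.{u}) (j) :
    (PGame.ofLists [x] [y]).moveRight j = y := by
  rw [PGame.ofLists_moveRight']
  exact List.getElem_singleton _

noncomputable def star'L : star'.{u}.LeftMoves := lm 0 0
noncomputable def star'R : star'.{u}.RightMoves := rm 0 0
noncomputable def up'L : up'.{u}.LeftMoves := lm 0 star'
noncomputable def up'R : up'.{u}.RightMoves := rm 0 star'

lemma star'_moveLeft (i) : star'.{u}.moveLeft i = 0 :=
  ofLists_singleton_moveLeft _ _ i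
lemma star'_moveRight (j) : star'.{u}.moveRight j = 0 :=
  ofLists_singleton_moveRight _ _ j
lemma up'_moveLeft (i) : up'.{u}.moveLeft i = 0 :=
  ofLists_singleton_moveLeft _ _ i
lemma up'_moveRight (j) : up'.{u}.moveRight j = star'.{u} :=
  ofLists_singleton_moveRight _ _ j

lemma zero_lf_star' : (0 : PGame.{u}) ⧏ star'.{u} := by
  refine PGame.lf_of_le_moveLeft (i := star'L) ?_
  rw [star'_moveLeft]

lemma zero_le_up' : (0 : PGame.{u}) ≤ up'.{u} := by
  rw [PGame.le_iff_forall_lf]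
  refine ⟨fun i => isEmptyElim i, fun j => ?_⟩
  rw [up'_moveRight]
  exact zero_lf_star'

lemma zero_lf_up' : (0 : PGame.{u}) ⧏ up'.{u} := by
  refine PGame.lf_of_le_moveLeft (i := up'L) ?_
  rw [up'_moveLeft]

lemma up'_pos : (0 : PGame.{u}) < up'.{u} :=
  PGame.lt_iff_le_and_lf.2 ⟨zero_le_up', zero_lf_up'⟩

lemma quot_up'_pos : (0 : Game.{u}) < ⟦up'.{u}⟧ := by
  have := PGame.lt_iff_game_lt.1 up'_pos.{u}
  simpa using this

lemma quot_nUp_succ (n : ℕ) : (⟦nUp.{u} (n + 1)⟧ : Game) = ⟦nUp.{u} n⟧ + ⟦up'.{u}⟧ := by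
  rw [show nUp.{u} (n + 1) = nUp.{u} n + up'.{u} from rfl, PGame.quot_add]

lemma quot_nUp_nonneg (n : ℕ) : (0 : Game.{u}) ≤ ⟦nUp.{u} n⟧ := by
  induction n with
  | zero => simp [nUp]
  | succ n ih =>
      rw [quot_nUp_succ]
      exact add_nonneg ih quot_up'_pos.le

lemma quot_nUp_pos (n : ℕ) : (0 : Game.{u}) < ⟦nUp.{u} (n + 1)⟧ := by
  rw [quot_nUp_succ]
  exact add_pos_of_nonneg_of_pos (quot_nUp_nonneg n) quot_up'_pos

lemma quot_nUp_lt_succ (n : ℕ) : (⟦nUp.{u} n⟧ : Game) < ⟦nUp.{u} (n + 1)⟧ := by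
  rw [quot_nUp_succ]
  exact lt_add_of_pos_right _ quot_up'_pos

lemma nUp_moveLeft : ∀ (n : ℕ) (i : (nUp.{u} n + up'.{u}).LeftMoves),
    (⟦(nUp.{u} n + up'.{u}).moveLeft i⟧ : Game) = ⟦nUp.{u} n⟧ := by
  intro n
  induction n with
  | zero =>
      intro i
      refine PGame.leftMoves_add_cases
        (P := fun i => (⟦(nUp.{u} 0 + up'.{u}).moveLeft i⟧ : Game) = ⟦nUp.{u} 0⟧)
        i (fun i => ?_) (fun i => ?_) <;> beta_reduce
      · exact isEmptyElim (show (0 : PGame.{u}).LeftMoves from i)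
      · rw [PGame.add_moveLeft_inr, up'_moveLeft]
        simp [nUp]
  | succ n ih =>
      intro i
      refine PGame.leftMoves_add_cases
        (P := fun i => (⟦(nUp.{u} (n + 1) + up'.{u}).moveLeft i⟧ : Game) = ⟦nUp.{u} (n + 1)⟧)
        i (fun i => ?_) (fun i => ?_) <;> beta_reduce
      · rw [PGame.add_moveLeft_inl, PGame.quot_add,
          show (⟦(nUp.{u} (n + 1)).moveLeft i⟧ : Game) = ⟦nUp.{u} n⟧ from ih i]
        exact (quot_nUp_succ n).symm
      · rw [PGame.add_moveLeft_inr, up'_moveLeft]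
        simp

lemma nUp_moveRight : ∀ (n : ℕ) (j : (nUp.{u} n + up'.{u}).RightMoves),
    (⟦(nUp.{u} n + up'.{u}).moveRight j⟧ : Game) = ⟦nUp.{u} n⟧ + ⟦star'.{u}⟧ := by
  intro n
  induction n with
  | zero =>
      intro j
      refine PGame.rightMoves_add_cases
        (P := fun j => (⟦(nUp.{u} 0 + up'.{u}).moveRight j⟧ : Game) = ⟦nUp.{u} 0⟧ + ⟦star'.{u}⟧)
        j (fun j => ?_) (fun j => ?_) <;> beta_reduce
      · exact isEmptyElim (show (0 : PGame.{u}).RightMoves from j)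
      · rw [PGame.add_moveRight_inr, up'_moveRight, PGame.quot_add]
  | succ n ih =>
      intro j
      refine PGame.rightMoves_add_cases
        (P := fun j => (⟦(nUp.{u} (n + 1) + up'.{u}).moveRight j⟧ : Game)
          = ⟦nUp.{u} (n + 1)⟧ + ⟦star'.{u}⟧)
        j (fun j => ?_) (fun j => ?_) <;> beta_reduce
      · rw [PGame.add_moveRight_inl, PGame.quot_add,
          show (⟦(nUp.{u} (n + 1)).moveRight j⟧ : Game) = ⟦nUp.{u} n⟧ + ⟦star'.{u}⟧ from ih j,
          quot_nUp_succ]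
        abel
      · rw [PGame.add_moveRight_inr, up'_moveRight, PGame.quot_add]

/-- The game `{0 | nUp n + *}`. -/
noncomputable def G' (n : ℕ) : PGame.{u} := PGame.ofLists [0] [nUp n + star']

noncomputable def G'L (n : ℕ) : (G'.{u} n).LeftMoves := lm 0 (nUp n + star')
noncomputable def G'R (n : ℕ) : (G'.{u} n).RightMoves := rm 0 (nUp n + star')

lemma G'_moveLeft (n : ℕ) (i) : (G'.{u} n).moveLeft i = 0 :=
  ofLists_singleton_moveLeft _ _ i

lemma G'_moveRight (n : ℕ) (j) : (G'.{u} n).moveRight j = nUp.{u} n + star'.{u} :=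
  ofLists_singleton_moveRight _ _ j

lemma G'_mono (n : ℕ) : G'.{u} n ≤ G'.{u} (n + 1) := by
  rw [PGame.le_iff_forall_lf]
  constructor
  · intro i
    rw [G'_moveLeft]
    refine PGame.lf_of_le_moveLeft (i := G'L (n + 1)) ?_
    rw [G'_moveLeft]
  · intro j
    rw [G'_moveRight]
    refine PGame.lf_of_moveRight_le (j := G'R n) ?_
    refine le_of_eq_of_le (G'_moveRight n _) ?_
    rw [PGame.le_iff_game_le, PGame.quot_add, PGame.quot_add]
    exact add_le_add_left (quot_nUp_lt_succ n).le _

lemma T_of_W (n : ℕ) (w : nUp.{u} n ⧏ G'.{u} n) : G'.{u} n ≈ nUp.{u} (n + 1) := by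
  constructor
  · rw [PGame.le_iff_forall_lf]
    constructor
    · intro i
      rw [G'_moveLeft]
      exact PGame.lf_of_lt (PGame.lt_iff_game_lt.2 (by simpa using quot_nUp_pos n))
    · intro j
      refine PGame.lf_of_moveRight_le (j := G'R n) ?_
      refine le_of_eq_of_le (G'_moveRight n _) ?_
      rw [PGame.le_iff_game_le, PGame.quot_add]
      exact le_of_eq (nUp_moveRight n j).symm
  · rw [PGame.le_iff_forall_lf]
    constructor
    · intro i
      have h : (nUp.{u} n + up'.{u}).moveLeft i ≈ nUp.{u} n :=
        PGame.equiv_iff_game_eq.2 (nUp_moveLeft n i)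
      exact (PGame.lf_congr_left h).2 w
    · intro j
      rw [G'_moveRight]
      show nUp.{u} n + up'.{u} ⧏ nUp.{u} n + star'.{u}
      refine PGame.lf_of_moveRight_le (j := PGame.toRightMovesAdd (Sum.inr up'R)) ?_
      rw [PGame.add_moveRight_inr, up'_moveRight]

lemma V_of (n : ℕ) (w : nUp.{u} n ⧏ G'.{u} (n + 1))
    (ht : ∀ i : (nUp.{u} n).LeftMoves,
      (⟦(nUp.{u} n).moveLeft i⟧ : Game) ≤ ⟦G'.{u} (n + 1)⟧) :
    nUp.{u} n + star'.{u} ≤ G'.{u} (n + 1) := by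
  rw [PGame.le_iff_forall_lf]
  constructor
  · intro i
    refine PGame.leftMoves_add_cases
      (P := fun i => (nUp.{u} n + star'.{u}).moveLeft i ⧏ G'.{u} (n + 1))
      i (fun i => ?_) (fun i => ?_) <;> beta_reduce
    · rw [PGame.add_moveLeft_inl]
      refine PGame.lf_of_moveRight_le
        (j := PGame.toRightMovesAdd (Sum.inr star'R)) ?_
      rw [PGame.add_moveRight_inr, star'_moveRight]
      rw [PGame.le_iff_game_le, PGame.quot_add]
      simpa using ht i
    · rw [PGame.add_moveLeft_inr, star'_moveLeft]
      exact (PGame.lf_congr_left (PGame.add_zero_equiv _)).2 w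
  · intro j
    rw [G'_moveRight]
    refine PGame.lf_of_lt (PGame.lt_iff_game_lt.2 ?_)
    rw [PGame.quot_add, PGame.quot_add]
    exact add_lt_add_left (quot_nUp_lt_succ n) _

lemma main : ∀ n : ℕ, (G'.{u} n ≈ nUp.{u} (n + 1)) ∧
    (nUp.{u} n + star'.{u} ≤ G'.{u} (n + 1)) := by
  intro n
  induction n with
  | zero =>
      have w0 : nUp.{u} 0 ⧏ G'.{u} 0 := by
        refine PGame.lf_of_le_moveLeft (i := G'L 0) ?_
        rw [G'_moveLeft]
        exact (show (0 : PGame.{u}) ≤ 0 from le_rfl)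
      refine ⟨T_of_W 0 w0, V_of 0 (PGame.lf_of_lf_of_le w0 (G'_mono 0)) ?_⟩
      intro i
      exact isEmptyElim (show (0 : PGame.{u}).LeftMoves from i)
  | succ n ih =>
      obtain ⟨tn, vn⟩ := ih
      have wsucc : nUp.{u} (n + 1) ⧏ G'.{u} (n + 1) := by
        refine PGame.lf_of_moveRight_le
          (j := PGame.toRightMovesAdd (x := nUp.{u} n) (y := up'.{u}) (Sum.inr up'R)) ?_
        show (nUp.{u} n + up'.{u}).moveRight _ ≤ _
        rw [PGame.add_moveRight_inr, up'_moveRight]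
        exact vn
      refine ⟨T_of_W _ wsucc, V_of _ (PGame.lf_of_lf_of_le wsucc (G'_mono _)) ?_⟩
      intro i
      calc (⟦(nUp.{u} (n + 1)).moveLeft i⟧ : Game)
          = ⟦nUp.{u} n⟧ := nUp_moveLeft n i
        _ ≤ ⟦nUp.{u} (n + 1)⟧ := (quot_nUp_lt_succ n).le
        _ = ⟦G'.{u} n⟧ := (PGame.game_eq tn).symm
        _ ≤ ⟦G'.{u} (n + 1)⟧ := PGame.le_iff_game_le.1 (G'_mono n)
        _ ≤ ⟦G'.{u} (n + 2)⟧ := PGame.le_iff_game_le.1 (G'_mono (n + 1))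

end Stmt1Aux

theorem stmt1 (n : ℕ) :
    PGame.ofLists [0] [nUp n + star'] ≈ nUp (n + 1) := (Stmt1Aux.main n).1
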